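/- The commutator PQ - QP of two orthogonal projections commutes with the positive operators T = √((P-Q)²) and C = √((P+Q-I)²). -/

import Mathlib

open ContinuousLinearMap
open scoped RealInnerProductSpace

section Helpers
variable {V : Type*} [NormedAddCommGroup V] [InnerProductSpace ℝ V] [CompleteSpace V]

lemma inner_nonneg_of_pos {A : V →L[ℝ] V} (hA : A.IsPositive) (x : V) : (0:ℝ) ≤ ⟪A x, x⟫ := by
  simpa using hA.inner_nonneg_left x

lemma pos_of_inner {A : V →L[ℝ] V} (hA : IsSelfAdjoint A) (h : ∀ x, (0:ℝ) ≤ ⟪A x, x⟫) :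
    A.IsPositive := by
  refine ⟨hA.isSymmetric, fun x => ?_⟩
  simpa [ContinuousLinearMap.reApplyInnerSelf] using h x

lemma sym_move {A : V →L[ℝ] V} (hA : IsSelfAdjoint A) (x y : V) : ⟪A x, y⟫ = ⟪x, A y⟫ :=
  hA.isSymmetric x y

/-- A self-adjoint square is positive. -/
lemma sq_isPositive {A : V →L[ℝ] V} (hA : IsSelfAdjoint A) : (A * A).IsPositive := by
  refine pos_of_inner (by simpa [IsSelfAdjoint, star_mul, hA.star_eq]) (fun x => ?_)
  have : (A * A) x = A (A x) := rfl
  rw [this, sym_move hA]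
  exact real_inner_self_nonneg

/-- Conjugation of a positive operator by a self-adjoint operator. -/
lemma conj_isPositive {A B : V →L[ℝ] V} (hA : A.IsPositive) (hB : IsSelfAdjoint B) :
    (B * A * B).IsPositive := by
  have := hA.conj_adjoint B
  rw [hB.adjoint_eq] at this
  have h2 : B ∘L A ∘L B = B * A * B := by rfl
  rwa [h2] at this

/-- A symmetric operator with vanishing quadratic form is zero. -/
lemma eq_zero_of_inner_self {A : V →L[ℝ] V} (hA : IsSelfAdjoint A)
    (h : ∀ x, ⟪A x, x⟫ = (0:ℝ)) : A = 0 := by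
  ext x
  have key : ∀ y, ⟪A x, y⟫ = (0:ℝ) := by
    intro y
    have h1 := h (x + y)
    have h2 := h x
    have h3 := h y
    have h4 : ⟪A y, x⟫ = ⟪A x, y⟫ := by
      rw [sym_move hA, real_inner_comm]
    simp only [map_add, inner_add_left, inner_add_right] at h1
    linarith
  simpa using ext_inner_right ℝ (fun y => by rw [key y]; simp)

lemma eq_zero_of_mul_star {A : V →L[ℝ] V} (h : A * star A = 0) : A = 0 := by
  have hs : star A = 0 := by
    ext x
    have : ⟪(star A) x, (star A) x⟫ = (0:ℝ) := by
      have h2 : ⟪(star A) x, (star A) x⟫ = ⟪x, (A * star A) x⟫ := by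
        have h := ContinuousLinearMap.adjoint_inner_left (𝕜 := ℝ) A ((star A) x) x
        rw [real_inner_comm]
        exact h.symm ▸ rfl
      rw [h2, h]
      simp
    simpa using inner_self_eq_zero.mp this
  calc A = star (star A) := (star_star A).symm
    _ = 0 := by rw [hs]; simp



variable {V : Type*} [NormedAddCommGroup V] [InnerProductSpace ℝ V] [CompleteSpace V]

noncomputable def iterSeq (T : V →L[ℝ] V) : ℕ → (V →L[ℝ] V)
  | 0 => T
  | (n+1) => iterSeq T n - iterSeq T n * iterSeq T n

/-- Core: if `0 ≤ T ≤ 1`, `S ≥ 0`, and `T` commutes with `S`, the product has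
nonnegative quadratic form. -/
lemma core_inner_nonneg (T S : V →L[ℝ] V) (hT : T.IsPositive) (hT1 : (1 - T).IsPositive)
    (hS : S.IsPositive) (hc : T * S = S * T) (x : V) : (0:ℝ) ≤ ⟪S (T x), x⟫ := by
  set X := iterSeq T with hX
  have hX0 : X 0 = T := rfl
  have hXsucc : ∀ n, X (n+1) = X n - X n * X n := fun n => rfl
  -- invariants
  have inv : ∀ n, (X n).IsPositive ∧ (1 - X n).IsPositive ∧ X n * S = S * X n := by
    intro n
    induction n with
    | zero => exact ⟨hT, hT1, hc⟩
    | succ n ih =>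
      obtain ⟨hp, hp1, hcs⟩ := ih
      have hsa := hp.isSelfAdjoint
      have hsa1 := hp1.isSelfAdjoint
      refine ⟨?_, ?_, ?_⟩
      · have key : X (n+1) = X n * (1 - X n) * X n + (1 - X n) * X n * (1 - X n) := by
          rw [hXsucc]; noncomm_ring
        rw [key]
        exact (conj_isPositive hp1 hsa).add (conj_isPositive hp hsa1)
      · have key : 1 - X (n+1) = (1 - X n) + X n * X n := by
          rw [hXsucc]; noncomm_ring
        rw [key]
        exact hp1.add (sq_isPositive hsa)
      · rw [hXsucc]
        rw [sub_mul, mul_sub, hcs, mul_assoc, hcs, ← mul_assoc, hcs, mul_assoc]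
  -- telescoping
  have step : ∀ n, ⟪S (X n x), x⟫ = ⟪S (X (n+1) x), x⟫ + ⟪S (X n x), X n x⟫ := by
    intro n
    have e1 : X n x = X (n+1) x + (X n * X n) x := by
      rw [hXsucc]; simp
    have e2 : S ((X n * X n) x) = X n (S (X n x)) := by
      have h5 : S * (X n * X n) = X n * (S * X n) := by
        rw [← mul_assoc, ← (inv n).2.2, mul_assoc, (inv n).2.2]
      calc S ((X n * X n) x) = (S * (X n * X n)) x := rfl
        _ = (X n * (S * X n)) x := by rw [h5]
        _ = X n (S (X n x)) := rfl
    calc ⟪S (X n x), x⟫ = ⟪S (X (n+1) x + (X n * X n) x), x⟫ := by rw [← e1]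
      _ = ⟪S (X (n+1) x), x⟫ + ⟪S ((X n * X n) x), x⟫ := by
          rw [map_add, inner_add_left]
      _ = ⟪S (X (n+1) x), x⟫ + ⟪S (X n x), X n x⟫ := by
          rw [e2, sym_move (inv n).1.isSelfAdjoint]
  have mono : ∀ n, ⟪S (T x), x⟫ ≥ ⟪S (X n x), x⟫ := by
    intro n
    induction n with
    | zero => rw [hX0]
    | succ n ih =>
      have := step n
      have hnn : (0:ℝ) ≤ ⟪S (X n x), X n x⟫ := inner_nonneg_of_pos hS _
      linarith
  -- partial sums of ‖X n x‖² are bounded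
  have dec : ∀ n, ⟪X (n+1) x, x⟫ = ⟪X n x, x⟫ - ⟪X n x, X n x⟫ := by
    intro n
    have e2 : (X n * X n) x = X n (X n x) := rfl
    rw [hXsucc]
    simp only [ContinuousLinearMap.sub_apply, inner_sub_left, e2]
    rw [sym_move (inv n).1.isSelfAdjoint (X n x) x, real_inner_comm]
  have bound : ∀ n, ⟪X n x, x⟫ ≤ ⟪T x, x⟫ := by
    intro n
    induction n with
    | zero => rw [hX0]
    | succ n ih =>
      have := dec n
      have : ⟪X (n+1) x, x⟫ ≤ ⟪X n x, x⟫ := by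
        rw [this]; nlinarith [real_inner_self_nonneg (x := X n x)]
      linarith
  -- small term exists for each ε
  have small : ∀ ε > (0:ℝ), ∃ n, ⟪X n x, X n x⟫ < ε := by
    intro ε hε
    by_contra h
    push_neg at h
    -- then ⟪X n x, x⟫ decreases by at least ε each step, contradiction with nonnegativity
    have lower : ∀ n, ⟪X n x, x⟫ ≤ ⟪T x, x⟫ - n * ε := by
      intro n
      induction n with
      | zero => simp [hX0]
      | succ n ih =>
        have hd := dec n
        have hε' := h n
        push_cast
        rw [hd]
        push_cast at ih
        linarith
    obtain ⟨n, hn⟩ := exists_nat_gt ((⟪T x, x⟫ : ℝ) / ε)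
    have h1 := lower n
    have h2 : (0:ℝ) ≤ ⟪X n x, x⟫ := inner_nonneg_of_pos (inv n).1 x
    have : (⟪T x, x⟫ : ℝ) < n * ε := by
      rw [div_lt_iff₀ hε] at hn
      linarith [hn]
    linarith
  -- conclude
  by_contra hneg
  push_neg at hneg
  set c := ⟪S (T x), x⟫ with hcdef
  have hc2 : (0:ℝ) < -c := by linarith
  obtain ⟨n, hn⟩ := small (((-c) / (‖S x‖ + 1))^2) (by positivity)
  have hXn : ‖X n x‖ < (-c) / (‖S x‖ + 1) := by
    have h1 : ⟪X n x, X n x⟫ = ‖X n x‖^2 := real_inner_self_eq_norm_sq _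
    rw [h1] at hn
    exact lt_of_pow_lt_pow_left₀ 2 (by positivity) hn
  have hb : |⟪S (X n x), x⟫| ≤ ‖X n x‖ * ‖S x‖ := by
    rw [sym_move hS.isSelfAdjoint, real_inner_comm]
    calc |⟪S x, X n x⟫| ≤ ‖S x‖ * ‖X n x‖ := abs_real_inner_le_norm _ _
      _ = ‖X n x‖ * ‖S x‖ := mul_comm _ _
  have h3 : ⟪S (X n x), x⟫ ≥ -(‖X n x‖ * ‖S x‖) := neg_le_of_abs_le hb
  have h4 : ‖X n x‖ * ‖S x‖ < (-c) := by
    calc ‖X n x‖ * ‖S x‖ ≤ ‖X n x‖ * (‖S x‖ + 1) := by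
          nlinarith [norm_nonneg (X n x)]
      _ < ((-c) / (‖S x‖ + 1)) * (‖S x‖ + 1) := by
          apply mul_lt_mul_of_pos_right hXn
          positivity
      _ = -c := by field_simp
  have := mono n
  linarith
/-- quadratic form of a product of commuting positive operators is nonneg. -/
lemma mul_pos_inner (T S : V →L[ℝ] V) (hT : T.IsPositive) (hS : S.IsPositive)
    (hc : T * S = S * T) (x : V) : (0:ℝ) ≤ ⟪S (T x), x⟫ := by
  rcases eq_or_ne T 0 with rfl | hTne
  · simp
  have hnorm : (0:ℝ) < ‖T‖ := norm_pos_iff.mpr hTne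
  set T₁ : V →L[ℝ] V := ‖T‖⁻¹ • T with hT₁def
  have hT₁sa : IsSelfAdjoint T₁ := by
    have := hT.isSelfAdjoint
    show star (‖T‖⁻¹ • T) = ‖T‖⁻¹ • T
    rw [star_smul, this.star_eq, star_trivial]
  have hT₁pos : T₁.IsPositive := by
    refine pos_of_inner hT₁sa (fun y => ?_)
    have : T₁ y = ‖T‖⁻¹ • (T y) := rfl
    rw [this, inner_smul_left]
    simp only [RCLike.conj_to_real]
    have := inner_nonneg_of_pos hT y
    positivity
  have hT₁1 : (1 - T₁).IsPositive := by
    refine pos_of_inner ((isPositive_one (E := V)).isSelfAdjoint.sub hT₁sa) (fun y => ?_)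
    have e : (1 - T₁) y = y - T₁ y := rfl
    rw [e, inner_sub_left]
    have h1 : ⟪T₁ y, y⟫ ≤ ‖T₁ y‖ * ‖y‖ := real_inner_le_norm _ _
    have h2 : ‖T₁ y‖ ≤ ‖y‖ := by
      have e2 : T₁ y = ‖T‖⁻¹ • (T y) := rfl
      rw [e2, norm_smul]
      have h5 : ‖T y‖ ≤ ‖T‖ * ‖y‖ := le_opNorm _ _
      calc ‖(‖T‖⁻¹ : ℝ)‖ * ‖T y‖ = ‖T‖⁻¹ * ‖T y‖ := by
            rw [Real.norm_eq_abs, abs_of_pos (inv_pos.mpr hnorm)]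
        _ ≤ ‖T‖⁻¹ * (‖T‖ * ‖y‖) := by
            apply mul_le_mul_of_nonneg_left h5 (inv_pos.mpr hnorm).le
        _ = ‖y‖ := by field_simp
    have h4 : ⟪y, y⟫ = ‖y‖ * ‖y‖ := real_inner_self_eq_norm_mul_norm y
    nlinarith [norm_nonneg y, norm_nonneg (T₁ y)]
  have hc₁ : T₁ * S = S * T₁ := by
    ext y
    have h := ContinuousLinearMap.ext_iff.mp hc y
    simp only [ContinuousLinearMap.mul_apply] at h
    simp only [ContinuousLinearMap.mul_apply, hT₁def, ContinuousLinearMap.smul_apply,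
      map_smul]
    rw [h]
  have hcore := core_inner_nonneg T₁ S hT₁pos hT₁1 hS hc₁ x
  have e : S (T₁ x) = ‖T‖⁻¹ • (S (T x)) := by
    rw [hT₁def]; simp
  rw [e, inner_smul_left] at hcore
  simp only [RCLike.conj_to_real] at hcore
  have h6 : (0:ℝ) ≤ ‖T‖ * (‖T‖⁻¹ * ⟪S (T x), x⟫) := mul_nonneg hnorm.le hcore
  rwa [← mul_assoc, mul_inv_cancel₀ hnorm.ne', one_mul] at h6

/-- KEY: a skew-adjoint operator commuting with the square of a positive operator
commutes with the operator itself. -/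
lemma key_comm (T D : V →L[ℝ] V) (hT : T.IsPositive) (hD : star D = -D)
    (hc : D * (T * T) = (T * T) * D) : D * T = T * D := by
  have hTsa : star T = T := hT.isSelfAdjoint
  set U : V →L[ℝ] V := D * T - T * D with hUdef
  have hUsa : IsSelfAdjoint U := by
    show star U = U
    rw [hUdef, star_sub, star_mul, star_mul, hTsa, hD]
    noncomm_ring
  -- T anticommutes with U
  have anti : T * U = -(U * T) := by
    have : T * U + U * T = 0 := by
      rw [hUdef]
      have expand : T * (D * T - T * D) + (D * T - T * D) * T
          = D * (T * T) - (T * T) * D + (T * (D * T) - T * (D * T)) := by noncomm_ring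
      rw [expand, hc]
      noncomm_ring
    linear_combination (norm := noncomm_ring) this
  -- U*U is positive and commutes with T
  have hU2pos : (U * U).IsPositive := by
    refine pos_of_inner ?_ (fun y => ?_)
    · show star (U * U) = U * U
      rw [star_mul, hUsa.star_eq]
    · have e : (U * U) y = U (U y) := rfl
      rw [e, sym_move hUsa]
      exact real_inner_self_nonneg
  have hcomm2 : T * (U * U) = (U * U) * T := by
    calc T * (U * U) = (T * U) * U := by rw [mul_assoc]
      _ = (-(U * T)) * U := by rw [anti]
      _ = U * (-(T * U)) := by noncomm_ring
      _ = U * (U * T) := by rw [anti]; noncomm_ring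
      _ = (U * U) * T := by rw [mul_assoc]
  -- the quadratic form of T * (U*U)  is both ≥0 and ≤0
  have hform : ∀ x, ⟪(T * (U * U)) x, x⟫ = (0:ℝ) := by
    intro x
    have h1 : (0:ℝ) ≤ ⟪(U * U) (T x), x⟫ := mul_pos_inner T (U * U) hT hU2pos hcomm2 x
    have e1 : (T * (U * U)) x = (U * U) (T x) := by rw [hcomm2]; rfl
    have h2 : ⟪(T * (U * U)) x, x⟫ ≤ 0 := by
      have e2 : T * (U * U) = -(U * (T * U)) := by
        calc T * (U * U) = (T * U) * U := by rw [mul_assoc]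
          _ = (-(U * T)) * U := by rw [anti]
          _ = -(U * (T * U)) := by noncomm_ring
      have e3 : (T * (U * U)) x = -(U (T (U x))) := by rw [e2]; rfl
      rw [e3, inner_neg_left, sym_move hUsa]
      have h7 : (0:ℝ) ≤ ⟪T (U x), U x⟫ := inner_nonneg_of_pos hT (U x)
      linarith
    rw [e1] at h2 ⊢
    linarith
  have hM0 : T * (U * U) = 0 := by
    refine eq_zero_of_inner_self ?_ hform
    show star (T * (U * U)) = T * (U * U)
    rw [star_mul, star_mul, hUsa.star_eq, hTsa, ← mul_assoc, ← hcomm2, mul_assoc]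
  -- hence T*U = 0
  have hTU : T * U = 0 := by
    apply eq_zero_of_mul_star
    have hst : star (T * U) = U * T := by rw [star_mul, hUsa.star_eq, hTsa]
    have e : T * U * (U * T) = (T * (U * U)) * T := by noncomm_ring
    rw [hst, e, hM0, zero_mul]
  have hUT : U * T = 0 := by
    have h := anti
    rw [hTU] at h
    exact neg_eq_zero.mp h.symm
  -- U² = -(T * (D*U)), so U³ = 0
  have hUU : U * U = -(T * (D * U)) := by
    have e : U * U = D * (T * U) - T * (D * U) := by
      rw [hUdef]; noncomm_ring
    rw [e, hTU]
    noncomm_ring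
  have hU3 : U * (U * U) = 0 := by
    have e : U * -(T * (D * U)) = -((U * T) * (D * U)) := by noncomm_ring
    rw [hUU, e, hUT]
    noncomm_ring
  have hU20 : U * U = 0 := by
    ext x
    have h : ⟪(U * U) x, (U * U) x⟫ = (0:ℝ) := by
      have e3 : U (U (U x)) = (U * (U * U)) x := rfl
      calc ⟪(U * U) x, (U * U) x⟫ = ⟪U (U x), U (U x)⟫ := rfl
        _ = ⟪U x, U (U (U x))⟫ := sym_move hUsa _ _
        _ = (0:ℝ) := by rw [e3, hU3]; simp
    simpa using inner_self_eq_zero.mp h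
  have hU0 : U = 0 := by
    ext x
    have h : ⟪U x, U x⟫ = (0:ℝ) := by
      have e2 : U (U x) = (U * U) x := rfl
      calc ⟪U x, U x⟫ = ⟪x, U (U x)⟫ := sym_move hUsa _ _
        _ = (0:ℝ) := by rw [e2, hU20]; simp
    simpa using inner_self_eq_zero.mp h
  have := sub_eq_zero.mp (hUdef ▸ hU0)
  exact this

end Helpers


theorem stmt_5 {V : Type*} [NormedAddCommGroup V] [InnerProductSpace ℝ V] [CompleteSpace V]
    (P Q T C : V →L[ℝ] V) (hP : P * P = P) (hPsa : IsSelfAdjoint P)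
    (hQ : Q * Q = Q) (hQsa : IsSelfAdjoint Q)
    (hT : T.IsPositive) (hT2 : T * T = (P - Q) * (P - Q))
    (hC : C.IsPositive) (hC2 : C * C = (P + Q - 1) * (P + Q - 1)) :
    (P * Q - Q * P) * T = T * (P * Q - Q * P) ∧
    (P * Q - Q * P) * C = C * (P * Q - Q * P) := by
  have hDskew : star (P * Q - Q * P) = -(P * Q - Q * P) := by
    rw [star_sub, star_mul, star_mul, hPsa.star_eq, hQsa.star_eq]
    noncomm_ring
  have hP3 : ∀ X : V →L[ℝ] V, P * (P * X) = P * X := fun X => by rw [← mul_assoc, hP]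
  have hQ3 : ∀ X : V →L[ℝ] V, Q * (Q * X) = Q * X := fun X => by rw [← mul_assoc, hQ]
  constructor
  · apply key_comm T (P * Q - Q * P) hT hDskew
    rw [hT2]
    simp only [mul_sub, sub_mul, mul_add, add_mul, mul_one, one_mul, mul_assoc, hP, hQ, hP3, hQ3]
    abel
  · apply key_comm C (P * Q - Q * P) hC hDskew
    rw [hC2]
    simp only [mul_sub, sub_mul, mul_add, add_mul, mul_one, one_mul, mul_assoc, hP, hQ, hP3, hQ3]
    abel
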